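/- Let X, Y be compact metric spaces with d_GH(X,Y) > 0, and suppose that for every positive integer m there is a compact metric space W(m) with d_GH(X,W(m)) + d_GH(W(m),Y) = d_GH(X,Y) such that W(m) contains an m-point subset with all pairwise distances equal to some fixed μ > 0. Then the family {W(m)} is not precompact in the Gromov–Hausdorff metric, and hence the metric segment [X,Y] (within compact metric spaces up to isometry) is not compact. -/

import Mathlib

open GromovHausdorff Metric Set

/-- In a compact metric space, finsets of `δ`-separated points have uniformly bounded
cardinality. -/
lemma sep_card_bound (Z : Type*) [MetricSpace Z] [CompactSpace Z] [Nonempty Z] (δ : ℝ) (hδ : 0 < δ) :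
    ∃ N : ℕ, ∀ T : Finset Z, (∀ a ∈ T, ∀ b ∈ T, a ≠ b → δ ≤ dist a b) → T.card ≤ N := by
  have htb : TotallyBounded (univ : Set Z) := isCompact_univ.totallyBounded
  rcases (totallyBounded_iff.1 htb) (δ / 2) (by linarith) with ⟨t, htf, hcov⟩
  refine ⟨htf.toFinset.card, fun T hT => ?_⟩
  have hmap : ∀ a ∈ T, ∃ c ∈ htf.toFinset, a ∈ ball c (δ / 2) := by
    intro a _
    have : a ∈ ⋃ y ∈ t, ball y (δ / 2) := hcov (mem_univ a)
    simp only [mem_iUnion] at this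
    rcases this with ⟨c, hc, hac⟩
    exact ⟨c, htf.mem_toFinset.2 hc, hac⟩
  classical
  choose f hf1 hf2 using hmap
  refine Finset.card_le_card_of_injOn (fun a => if h : a ∈ T then f a h else Classical.arbitrary Z)
    (fun a ha => by simp only [dif_pos (Finset.mem_coe.1 ha)]; exact hf1 a ha) ?_
  intro a ha b hb hab
  simp only [Finset.mem_coe] at ha hb
  simp only [dif_pos ha, dif_pos hb] at hab
  by_contra hne
  have h1 := hf2 a ha
  have h2 := hf2 b hb
  rw [hab] at h1
  have : dist a b < δ := by
    calc dist a b ≤ dist a (f b hb) + dist (f b hb) b := dist_triangle _ _ _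
    _ < δ / 2 + δ / 2 := by
        rw [mem_ball] at h1 h2
        rw [dist_comm (f b hb) b]; linarith
    _ = δ := by ring
  exact absurd (hT a ha b hb hne) (by linarith)

/-- If `ghDist Z V < μ/4` and `Z` contains an `m`-point `μ`-separated set, then `V` contains an
`m`-point `μ/2`-separated set. -/
lemma transfer_simplex {Z V : Type*} [MetricSpace Z] [CompactSpace Z] [Nonempty Z]
    [MetricSpace V] [CompactSpace V] [Nonempty V] {μ : ℝ} (hμ : 0 < μ)
    (hlt : ghDist Z V < μ / 4) {S : Finset Z}
    (hS : ∀ s ∈ S, ∀ s' ∈ S, s ≠ s' → dist s s' = μ) :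
    ∃ T : Finset V, T.card = S.card ∧ ∀ a ∈ T, ∀ b ∈ T, a ≠ b → μ / 2 ≤ dist a b := by
  classical
  obtain ⟨Φ, Ψ, hΦ, hΨ, hd⟩ := ghDist_eq_hausdorffDist Z V
  rw [hd] at hlt
  have hfin : EMetric.hausdorffEdist (range Φ) (range Ψ) ≠ ⊤ :=
    hausdorffEdist_ne_top_of_nonempty_of_bounded (range_nonempty _) (range_nonempty _)
      (isCompact_range hΦ.continuous).isBounded (isCompact_range hΨ.continuous).isBounded
  have hmap : ∀ s : Z, ∃ v : V, dist (Φ s) (Ψ v) < μ / 4 := by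
    intro s
    rcases exists_dist_lt_of_hausdorffDist_lt (mem_range_self s) hlt hfin with ⟨y, hy, hdy⟩
    rcases hy with ⟨v, rfl⟩
    exact ⟨v, hdy⟩
  choose g hg using hmap
  have hsep : ∀ a ∈ S, ∀ b ∈ S, a ≠ b → μ / 2 ≤ dist (g a) (g b) := by
    intro a ha b hb hab
    have h1 := hg a
    have h2 := hg b
    have hab' : dist (Φ a) (Φ b) = μ := by rw [hΦ.dist_eq]; exact hS a ha b hb hab
    have hV : dist (Ψ (g a)) (Ψ (g b)) = dist (g a) (g b) := hΨ.dist_eq _ _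
    have : dist (Φ a) (Φ b) ≤ dist (Φ a) (Ψ (g a)) + dist (Ψ (g a)) (Ψ (g b)) +
        dist (Ψ (g b)) (Φ b) := dist_triangle4 _ _ _ _
    rw [hab', hV, dist_comm (Ψ (g b)) (Φ b)] at this
    linarith
  have hinj : Set.InjOn g S := by
    intro a ha b hb hab
    by_contra hne
    have := hsep a ha b hb hne
    rw [hab, dist_self] at this
    linarith
  refine ⟨S.image g, Finset.card_image_of_injOn hinj, ?_⟩
  intro a ha b hb hab
  rcases Finset.mem_image.1 ha with ⟨x, hx, rfl⟩
  rcases Finset.mem_image.1 hb with ⟨y, hy, rfl⟩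
  exact hsep x hx y hy (fun h => hab (by rw [h]))

/-- If every positive integer `m` admits a compact space `W m` on the segment `[X,Y]`
containing an `m`-point `μ`-simplex, then the family `{W m}` is not precompact (not totally
bounded) in the Gromov–Hausdorff space, and the metric segment `[X,Y]` is not compact. -/
theorem stmt9 {X Y : Type*} [MetricSpace X] [CompactSpace X] [Nonempty X]
    [MetricSpace Y] [CompactSpace Y] [Nonempty Y]
    (hXY : 0 < GromovHausdorff.ghDist X Y)
    (W : ℕ → Type) [∀ m, MetricSpace (W m)] [∀ m, CompactSpace (W m)] [∀ m, Nonempty (W m)]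
    (μ : ℝ) (hμ : 0 < μ)
    (hseg : ∀ m, GromovHausdorff.ghDist X (W m) + GromovHausdorff.ghDist (W m) Y =
      GromovHausdorff.ghDist X Y)
    (hsim : ∀ m, 1 ≤ m → ∃ S : Finset (W m), S.card = m ∧
      ∀ s ∈ S, ∀ s' ∈ S, s ≠ s' → dist s s' = μ) :
    ¬ TotallyBounded (Set.range fun m => GromovHausdorff.toGHSpace (W m)) ∧
    ¬ IsCompact {p : GromovHausdorff.GHSpace |
        dist (GromovHausdorff.toGHSpace X) p + dist p (GromovHausdorff.toGHSpace Y) =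
          dist (GromovHausdorff.toGHSpace X) (GromovHausdorff.toGHSpace Y)} := by
  classical
  have main : ¬ TotallyBounded (Set.range fun m => GromovHausdorff.toGHSpace (W m)) := by
    intro htb
    rcases (totallyBounded_iff.1 htb) (μ / 8) (by linarith) with ⟨t, htf, hcov⟩
    -- for each center `c`, a bound on separated sets in `c.Rep`
    choose Nc hNc using fun c : GHSpace => sep_card_bound c.Rep (μ / 2) (by linarith)
    set N : ℕ := htf.toFinset.sup Nc with hN
    set m : ℕ := N + 1 with hm
    obtain ⟨S, hScard, hSsep⟩ := hsim m (Nat.le_add_left 1 N)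
    have hmem : toGHSpace (W m) ∈ ⋃ y ∈ t, ball y (μ / 8) := hcov ⟨m, rfl⟩
    simp only [mem_iUnion] at hmem
    obtain ⟨c, hc, hball⟩ := hmem
    have hdist : ghDist (W m) c.Rep < μ / 4 := by
      have : ghDist (W m) c.Rep = dist (toGHSpace (W m)) c := by
        rw [ghDist, c.toGHSpace_rep]
      rw [this]
      rw [mem_ball] at hball
      linarith
    obtain ⟨T, hTcard, hTsep⟩ := transfer_simplex hμ hdist hSsep
    have hle : T.card ≤ Nc c := hNc c T hTsep
    have hle2 : Nc c ≤ N := Finset.le_sup (htf.mem_toFinset.2 hc)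
    rw [hTcard, hScard] at hle
    omega
  refine ⟨main, fun hcomp => main ?_⟩
  have hsub : (Set.range fun m => GromovHausdorff.toGHSpace (W m)) ⊆
      {p : GHSpace | dist (toGHSpace X) p + dist p (toGHSpace Y) =
        dist (toGHSpace X) (toGHSpace Y)} := by
    rintro p ⟨m, rfl⟩
    exact hseg m
  exact (hcomp.totallyBounded).subset hsub
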